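/- Define Ψ: ℝ³ → H₂ (2×2 real symmetric or complex Hermitian matrices) by Ψ(x,y,t) = (1/2)[[t+x, y],[y, t-x]], and Φ: H₂ → ℝ³ by Φ(A) = (A₁₁ - A₂₂, A₁₂ + A₂₁, A₁₁ + A₂₂). Then: (a) Φ ∘ Ψ = Id on ℝ³; (b) Ψ maps the cone generated by (1,0,1), (0,1,1), (-1,0,1), (0,-1,1) into the cone of positive semidefinite matrices; (c) for every positive semidefinite A ∈ H₂, Φ(A) = (x,y,t) satisfies |x| ≤ t, |y| ≤ t, and not both |x| = t and |y| = t unless A = 0. -/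

import Mathlib

noncomputable section

/-- The map `Ψ : ℝ³ → H₂`. -/
def PsiQubit (x y t : ℝ) : Matrix (Fin 2) (Fin 2) ℝ :=
  (1 / 2 : ℝ) • !![t + x, y; y, t - x]

/-- The map `Φ : H₂ → ℝ³`. -/
def PhiQubit (A : Matrix (Fin 2) (Fin 2) ℝ) : Fin 3 → ℝ :=
  ![A 0 0 - A 1 1, A 0 1 + A 1 0, A 0 0 + A 1 1]

theorem qubit_kite_square_sandwiching :
    (∀ v : Fin 3 → ℝ, PhiQubit (PsiQubit (v 0) (v 1) (v 2)) = v) ∧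
    (∀ a b c d : ℝ, 0 ≤ a → 0 ≤ b → 0 ≤ c → 0 ≤ d →
      ∀ v : Fin 3 → ℝ,
        v = a • ![1, 0, 1] + b • ![0, 1, 1] + c • ![-1, 0, 1] + d • ![0, -1, 1] →
        (PsiQubit (v 0) (v 1) (v 2)).PosSemidef) ∧
    (∀ A : Matrix (Fin 2) (Fin 2) ℝ, A.PosSemidef →
      |PhiQubit A 0| ≤ PhiQubit A 2 ∧ |PhiQubit A 1| ≤ PhiQubit A 2 ∧
      (A ≠ 0 → ¬ (|PhiQubit A 0| = PhiQubit A 2 ∧ |PhiQubit A 1| = PhiQubit A 2))) := by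
  refine ⟨?_, ?_, ?_⟩
  · intro v
    funext i
    fin_cases i <;> simp [PhiQubit, PsiQubit] <;> ring
  · intro a b c d ha hb hc hd v hv
    subst hv
    have h0 : ((a • ![(1:ℝ), 0, 1] + b • ![0, 1, 1] + c • ![-1, 0, 1] + d • ![0, -1, 1] : Fin 3 → ℝ)) 0 = a - c := by
      simp; ring
    have h1 : ((a • ![(1:ℝ), 0, 1] + b • ![0, 1, 1] + c • ![-1, 0, 1] + d • ![0, -1, 1] : Fin 3 → ℝ)) 1 = b - d := by
      simp; ring
    have h2 : ((a • ![(1:ℝ), 0, 1] + b • ![0, 1, 1] + c • ![-1, 0, 1] + d • ![0, -1, 1] : Fin 3 → ℝ)) 2 = a + b + c + d := by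
      simp
    rw [h0, h1, h2]
    refine Matrix.PosSemidef.of_dotProduct_mulVec_nonneg ?_ ?_
    · ext i j
      fin_cases i <;> fin_cases j <;>
        simp [PsiQubit, Matrix.conjTranspose_apply]
    · intro x
      have hx : dotProduct (star x)
            (Matrix.mulVec (PsiQubit (a - c) (b - d) (a + b + c + d)) x) =
          a * (x 0)^2 + c * (x 1)^2 + (b/2) * (x 0 + x 1)^2 + (d/2) * (x 0 - x 1)^2 := by
        simp [PsiQubit, dotProduct, Matrix.mulVec, Fin.sum_univ_two]
        ring
      rw [hx]
      positivity
  · intro A hA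
    have hsym : A 1 0 = A 0 1 := by
      have := congrFun (congrFun hA.1 0) 1
      simpa [Matrix.conjTranspose_apply] using this
    have h00 : 0 ≤ A 0 0 := by
      have := hA.dotProduct_mulVec_nonneg ![1, 0]
      simpa [dotProduct, Matrix.mulVec, Fin.sum_univ_two] using this
    have h11 : 0 ≤ A 1 1 := by
      have := hA.dotProduct_mulVec_nonneg ![0, 1]
      simpa [dotProduct, Matrix.mulVec, Fin.sum_univ_two] using this
    have hdet : 0 ≤ A 0 0 * A 1 1 - A 0 1 * A 0 1 := by
      have hq : ∀ s : ℝ, 0 ≤ A 0 0 * (s * s) + (2 * A 0 1) * s + A 1 1 := by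
        intro s
        have := hA.dotProduct_mulVec_nonneg ![s, 1]
        simp [dotProduct, Matrix.mulVec, Fin.sum_univ_two] at this
        rw [hsym] at this
        nlinarith [this]
      have := discrim_le_zero hq
      rw [discrim] at this
      nlinarith [this]
    refine ⟨?_, ?_, ?_⟩
    · simp only [PhiQubit]
      rw [abs_le]
      constructor <;> simp <;> linarith
    · simp only [PhiQubit]
      rw [abs_le]
      constructor <;> simp <;> nlinarith [sq_nonneg (A 0 0 - A 1 1), sq_nonneg (A 0 0 + A 1 1)]
    · intro hne ⟨h1, h2⟩
      apply hne
      simp only [PhiQubit] at h1 h2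
      simp at h1 h2
      have hprod : A 0 0 * A 1 1 = 0 := by
        have := sq_abs (A 0 0 - A 1 1)
        nlinarith [sq_abs (A 0 0 - A 1 1), h1]
      have h01 : A 0 1 = 0 := by nlinarith [sq_nonneg (A 0 1)]
      have ht : A 0 0 + A 1 1 = 0 := by
        rw [← h2, hsym, h01]; simp
      have e0 : A 0 0 = 0 := by linarith
      have e1 : A 1 1 = 0 := by linarith
      ext i j
      fin_cases i <;> fin_cases j <;> simp [e0, e1, h01, hsym]
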